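/- Let Υ be a symmetric positive definite 3×3 real matrix and let G_Υ = {(D, m, E) ∈ ℝ × ℝ³ × ℝ : D > 0 and E > √(D² + mᵀΥm)}. Then G_Υ is a convex set, and moreover λU' + (1−λ)U'' ∈ G_Υ for any U' ∈ G_Υ, U'' ∈ cl(G_Υ), and λ ∈ (0,1]. -/

import Mathlib

open scoped Matrix

namespace Stmt7Aux

noncomputable def f (Y : Matrix (Fin 3) (Fin 3) ℝ) (u : ℝ × (Fin 3 → ℝ)) : ℝ :=
  Real.sqrt (u.1 ^ 2 + u.2 ⬝ᵥ Y.mulVec u.2)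

lemma q_nonneg (Y : Matrix (Fin 3) (Fin 3) ℝ) (hY : Y.PosDef) (u : ℝ × (Fin 3 → ℝ)) :
    0 ≤ u.1 ^ 2 + u.2 ⬝ᵥ Y.mulVec u.2 := by
  have h := hY.posSemidef.dotProduct_mulVec_nonneg u.2
  simp only [star_trivial] at h
  have := sq_nonneg u.1
  linarith

lemma b_symm (Y : Matrix (Fin 3) (Fin 3) ℝ) (hY : Y.PosDef) (x y : Fin 3 → ℝ) :
    x ⬝ᵥ Y.mulVec y = y ⬝ᵥ Y.mulVec x := by
  have hsymm : Yᵀ = Y := by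
    have := hY.1
    simpa [Matrix.IsHermitian, Matrix.conjTranspose_eq_transpose_of_trivial] using this
  calc x ⬝ᵥ Y.mulVec y = (x ᵥ* Y) ⬝ᵥ y := Matrix.dotProduct_mulVec x Y y
    _ = (x ᵥ* Yᵀ) ⬝ᵥ y := by rw [hsymm]
    _ = (Y *ᵥ x) ⬝ᵥ y := by rw [Matrix.vecMul_transpose]
    _ = y ⬝ᵥ Y.mulVec x := dotProduct_comm _ _

lemma q_expand (Y : Matrix (Fin 3) (Fin 3) ℝ) (hY : Y.PosDef) (u v : ℝ × (Fin 3 → ℝ)) (t : ℝ) :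
    (u + t • v).1 ^ 2 + (u + t • v).2 ⬝ᵥ Y.mulVec (u + t • v).2 =
      (u.1 ^ 2 + u.2 ⬝ᵥ Y.mulVec u.2) + 2 * t * (u.1 * v.1 + u.2 ⬝ᵥ Y.mulVec v.2) +
        t ^ 2 * (v.1 ^ 2 + v.2 ⬝ᵥ Y.mulVec v.2) := by
  have hvu : v.2 ⬝ᵥ Y.mulVec u.2 = u.2 ⬝ᵥ Y.mulVec v.2 := b_symm Y hY v.2 u.2
  simp only [Prod.fst_add, Prod.snd_add, Prod.smul_fst, Prod.smul_snd, smul_eq_mul,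
    Matrix.mulVec_add, Matrix.mulVec_smul, dotProduct_add, add_dotProduct,
    dotProduct_smul, smul_dotProduct, smul_eq_mul, hvu]
  ring

lemma cauchy_schwarz (Y : Matrix (Fin 3) (Fin 3) ℝ) (hY : Y.PosDef) (u v : ℝ × (Fin 3 → ℝ)) :
    u.1 * v.1 + u.2 ⬝ᵥ Y.mulVec v.2 ≤ f Y u * f Y v := by
  set B : ℝ := u.1 * v.1 + u.2 ⬝ᵥ Y.mulVec v.2 with hB
  set Qu : ℝ := u.1 ^ 2 + u.2 ⬝ᵥ Y.mulVec u.2 with hQu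
  set Qv : ℝ := v.1 ^ 2 + v.2 ⬝ᵥ Y.mulVec v.2 with hQv
  have hQu0 : 0 ≤ Qu := q_nonneg Y hY u
  have hQv0 : 0 ≤ Qv := q_nonneg Y hY v
  have key : ∀ t : ℝ, 0 ≤ Qv * (t * t) + (2 * B) * t + Qu := by
    intro t
    have h := q_nonneg Y hY (u + t • v)
    rw [q_expand Y hY u v t] at h
    rw [hB, hQu, hQv]
    nlinarith [h]
  have hd := discrim_le_zero key
  rw [discrim] at hd
  have hB2 : B ^ 2 ≤ Qu * Qv := by nlinarith
  have : B ≤ Real.sqrt (Qu * Qv) := by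
    calc B ≤ |B| := le_abs_self B
      _ = Real.sqrt (B ^ 2) := (Real.sqrt_sq_eq_abs B).symm
      _ ≤ Real.sqrt (Qu * Qv) := Real.sqrt_le_sqrt hB2
  calc B ≤ Real.sqrt (Qu * Qv) := this
    _ = Real.sqrt Qu * Real.sqrt Qv := Real.sqrt_mul hQu0 _
    _ = f Y u * f Y v := rfl

lemma f_add_le (Y : Matrix (Fin 3) (Fin 3) ℝ) (hY : Y.PosDef) (u v : ℝ × (Fin 3 → ℝ)) :
    f Y (u + v) ≤ f Y u + f Y v := by
  have hcs := cauchy_schwarz Y hY u v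
  have hQu0 : 0 ≤ u.1 ^ 2 + u.2 ⬝ᵥ Y.mulVec u.2 := q_nonneg Y hY u
  have hQv0 : 0 ≤ v.1 ^ 2 + v.2 ⬝ᵥ Y.mulVec v.2 := q_nonneg Y hY v
  have hfu : 0 ≤ f Y u := Real.sqrt_nonneg _
  have hfv : 0 ≤ f Y v := Real.sqrt_nonneg _
  have hqe : (u + v).1 ^ 2 + (u + v).2 ⬝ᵥ Y.mulVec (u + v).2 ≤ (f Y u + f Y v) ^ 2 := by
    have h1 := q_expand Y hY u v 1
    simp only [one_smul, mul_one, one_pow, one_mul] at h1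
    have hu2 : Real.sqrt (u.1 ^ 2 + u.2 ⬝ᵥ Y.mulVec u.2) ^ 2 = u.1 ^ 2 + u.2 ⬝ᵥ Y.mulVec u.2 :=
      Real.sq_sqrt hQu0
    have hv2 : Real.sqrt (v.1 ^ 2 + v.2 ⬝ᵥ Y.mulVec v.2) ^ 2 = v.1 ^ 2 + v.2 ⬝ᵥ Y.mulVec v.2 :=
      Real.sq_sqrt hQv0
    rw [h1]
    simp only [f] at hcs ⊢
    nlinarith [hcs]
  calc f Y (u + v) ≤ Real.sqrt ((f Y u + f Y v) ^ 2) := Real.sqrt_le_sqrt hqe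
    _ = f Y u + f Y v := Real.sqrt_sq (by positivity)

lemma f_smul (Y : Matrix (Fin 3) (Fin 3) ℝ) (u : ℝ × (Fin 3 → ℝ)) {t : ℝ} (ht : 0 ≤ t) :
    f Y (t • u) = t * f Y u := by
  have : (t • u).1 ^ 2 + (t • u).2 ⬝ᵥ Y.mulVec (t • u).2 =
      t ^ 2 * (u.1 ^ 2 + u.2 ⬝ᵥ Y.mulVec u.2) := by
    simp only [Prod.smul_fst, Prod.smul_snd, smul_eq_mul, Matrix.mulVec_smul,
      dotProduct_smul, smul_dotProduct, smul_eq_mul]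
    ring
  rw [f, this, Real.sqrt_mul (sq_nonneg t), Real.sqrt_sq ht]
  rfl

end Stmt7Aux

/-- The admissible state set G_Y in conservative variables is convex, and mixing a
point of G_Y with a point of its closure (with positive weight on the former)
stays in G_Y. -/
theorem stmt7 (Y : Matrix (Fin 3) (Fin 3) ℝ) (hY : Y.PosDef)
    (G : Set (ℝ × (Fin 3 → ℝ) × ℝ))
    (hG : G = {U : ℝ × (Fin 3 → ℝ) × ℝ | 0 < U.1 ∧
        Real.sqrt (U.1 ^ 2 + U.2.1 ⬝ᵥ Y.mulVec U.2.1) < U.2.2}) :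
    Convex ℝ G ∧
    ∀ U' ∈ G, ∀ U'' ∈ closure G, ∀ t : ℝ, 0 < t → t ≤ 1 →
      t • U' + (1 - t) • U'' ∈ G := by
  classical
  set f := Stmt7Aux.f Y with hf
  -- the closed superset
  set S : Set (ℝ × (Fin 3 → ℝ) × ℝ) :=
    {U | 0 ≤ U.1 ∧ Real.sqrt (U.1 ^ 2 + U.2.1 ⬝ᵥ Y.mulVec U.2.1) ≤ U.2.2} with hS
  have hGS : G ⊆ S := by
    rw [hG, hS]
    rintro U ⟨h1, h2⟩
    exact ⟨le_of_lt h1, le_of_lt h2⟩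
  have hcont : Continuous fun U : ℝ × (Fin 3 → ℝ) × ℝ =>
      Real.sqrt (U.1 ^ 2 + U.2.1 ⬝ᵥ Y.mulVec U.2.1) := by
    apply Real.continuous_sqrt.comp
    apply Continuous.add
    · fun_prop
    · simp only [dotProduct, Matrix.mulVec]
      apply continuous_finset_sum
      intro i _
      apply Continuous.mul
      · exact (continuous_apply i).comp (continuous_fst.comp continuous_snd)
      · apply continuous_finset_sum
        intro j _
        exact continuous_const.mul
          ((continuous_apply j).comp (continuous_fst.comp continuous_snd))
  have hSclosed : IsClosed S := by
    rw [hS]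
    exact IsClosed.inter (isClosed_le continuous_const continuous_fst)
      (isClosed_le hcont (continuous_snd.comp continuous_snd))
  have hclG : closure G ⊆ S := closure_minimal hGS hSclosed
  -- the key mixing statement
  have key : ∀ U' ∈ G, ∀ U'' ∈ closure G, ∀ t : ℝ, 0 < t → t ≤ 1 →
      t • U' + (1 - t) • U'' ∈ G := by
    intro U' hU' U'' hU'' t ht ht1
    rw [hG] at hU' ⊢
    obtain ⟨h1, h2⟩ := hU'
    obtain ⟨h3, h4⟩ := hclG hU''
    have ht' : (0:ℝ) ≤ 1 - t := by linarith
    constructor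
    · show 0 < (t • U' + (1 - t) • U'').1
      simp only [Prod.fst_add, Prod.smul_fst, smul_eq_mul]
      have := mul_pos ht h1
      have := mul_nonneg ht' h3
      linarith
    · show Real.sqrt ((t • U' + (1 - t) • U'').1 ^ 2 +
        (t • U' + (1 - t) • U'').2.1 ⬝ᵥ Y.mulVec (t • U' + (1 - t) • U'').2.1) <
        (t • U' + (1 - t) • U'').2.2
      set u' : ℝ × (Fin 3 → ℝ) := (U'.1, U'.2.1) with hu'
      set u'' : ℝ × (Fin 3 → ℝ) := (U''.1, U''.2.1) with hu''
      have heq1 : (t • U' + (1 - t) • U'').1 = (t • u' + (1 - t) • u'').1 := by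
        simp [hu', hu'', Prod.fst_add, Prod.smul_fst]
      have heq2 : (t • U' + (1 - t) • U'').2.1 = (t • u' + (1 - t) • u'').2 := by
        simp [hu', hu'', Prod.snd_add, Prod.smul_snd]
      rw [heq1, heq2]
      have hfle : f (t • u' + (1 - t) • u'') ≤ t * f u' + (1 - t) * f u'' := by
        calc f (t • u' + (1 - t) • u'') ≤ f (t • u') + f ((1 - t) • u'') :=
              Stmt7Aux.f_add_le Y hY _ _
          _ = t * f u' + (1 - t) * f u'' := by
              rw [hf, Stmt7Aux.f_smul Y u' (le_of_lt ht), Stmt7Aux.f_smul Y u'' ht']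
      have hfu' : f u' < U'.2.2 := h2
      have hfu'' : f u'' ≤ U''.2.2 := h4
      have hlt : t * f u' + (1 - t) * f u'' < t * U'.2.2 + (1 - t) * U''.2.2 := by
        have h5 : t * f u' < t * U'.2.2 := by exact mul_lt_mul_of_pos_left hfu' ht
        have h6 : (1 - t) * f u'' ≤ (1 - t) * U''.2.2 := mul_le_mul_of_nonneg_left hfu'' ht'
        linarith
      have hrhs : (t • U' + (1 - t) • U'').2.2 = t * U'.2.2 + (1 - t) * U''.2.2 := by
        simp [Prod.snd_add, Prod.smul_snd, smul_eq_mul]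
      rw [hrhs]
      calc Real.sqrt ((t • u' + (1 - t) • u'').1 ^ 2 +
            (t • u' + (1 - t) • u'').2 ⬝ᵥ Y.mulVec (t • u' + (1 - t) • u'').2)
          = f (t • u' + (1 - t) • u'') := rfl
        _ ≤ t * f u' + (1 - t) * f u'' := hfle
        _ < t * U'.2.2 + (1 - t) * U''.2.2 := hlt
  refine ⟨?_, key⟩
  intro x hx y hy a b ha hb hab
  rcases eq_or_lt_of_le ha with ha0 | ha0
  · have hb1 : b = 1 := by linarith
    have : a • x + b • y = y := by rw [← ha0, hb1]; simp
    rw [this]; exact hy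
  · have hb' : b = 1 - a := by linarith
    have ha1 : a ≤ 1 := by linarith
    have := key x hx y (subset_closure hy) a ha0 ha1
    rwa [← hb'] at this
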